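/- arXiv:2602.07671 — 2 statements merged into one kernel-verified Lean document; each statement's English description precedes it below -/
import Mathlib

section
/- Let μ₁, μ₂ ∈ ℝⁿ and let Σ₁, Σ₂ be commuting symmetric positive definite matrices with spectra in [λ_min, λ_max], 0 < λ_min ≤ λ_max. Define Δ² := ‖μ₁−μ₂‖₂² + ‖Σ₁−Σ₂‖_F² and W₂² := ‖μ₁−μ₂‖₂² + ‖Σ₁^{1/2} − Σ₂^{1/2}‖_F². Then c₋² Δ² ≤ W₂² ≤ c₊² Δ², where c₋ = min(1, (2√λ_max)^{-1}) and c₊ = max(1, (2√λ_min)^{-1}). -/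
open Matrix

open scoped ComplexOrder in
/-- The positive semidefinite square root of a positive semidefinite matrix, as defined in the
older Mathlib (`Matrix.PosSemidef.sqrt`, since removed). -/
noncomputable def Matrix.PosSemidef.sqrt {n 𝕜 : Type*} [Fintype n] [RCLike 𝕜] [DecidableEq n]
    {A : Matrix n n 𝕜} (hA : A.PosSemidef) : Matrix n n 𝕜 :=
  (hA.1.eigenvectorUnitary : Matrix n n 𝕜) * diagonal ((↑) ∘ (√·) ∘ hA.1.eigenvalues) *
    (star hA.1.eigenvectorUnitary : Matrix n n 𝕜)

/-- Squared Frobenius norm of a real matrix. -/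
noncomputable def frobSq {n : ℕ} (A : Matrix (Fin n) (Fin n) ℝ) : ℝ :=
  ∑ i, ∑ j, (A i j) ^ 2

namespace WassersteinAux

variable {n : ℕ}

lemma frobSq_eq_trace (A : Matrix (Fin n) (Fin n) ℝ) :
    frobSq A = (Aᴴ * A).trace := by
  simp only [frobSq, Matrix.trace, Matrix.diag, Matrix.mul_apply, Matrix.conjTranspose_apply,
    star_trivial, ← sq]
  exact Finset.sum_comm

lemma trace_nonneg {P : Matrix (Fin n) (Fin n) ℝ} (hP : P.PosSemidef) : 0 ≤ P.trace := by
  exact hP.trace_nonneg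

lemma commute_diagonal_map {M : Matrix (Fin n) (Fin n) ℝ} {d d' : Fin n → ℝ}
    (h : M * diagonal d = diagonal d * M)
    (hdd : ∀ i j, d i = d j → d' i = d' j) :
    M * diagonal d' = diagonal d' * M := by
  ext i j
  have h' := congrFun (congrFun h i) j
  rw [Matrix.mul_diagonal, Matrix.diagonal_mul] at h'
  rw [Matrix.mul_diagonal, Matrix.diagonal_mul]
  rcases eq_or_ne (d i) (d j) with hd | hd
  · rw [hdd i j hd, mul_comm]
  · have hM : M i j = 0 := by
      have : M i j * (d j - d i) = 0 := by ring_nf; linarith [h']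
      rcases mul_eq_zero.mp this with h0 | h0
      · exact h0
      · exact absurd (by linarith [sub_eq_zero.mp h0] : d i = d j) hd
    simp [hM]

lemma ofReal_real : (RCLike.ofReal : ℝ → ℝ) = id := rfl

lemma commute_conj_diag {S X : Matrix (Fin n) (Fin n) ℝ} (hS : S.IsHermitian)
    (h : X * S = S * X) (f : ℝ → ℝ) :
    X * ((hS.eigenvectorUnitary : Matrix (Fin n) (Fin n) ℝ) * diagonal (f ∘ hS.eigenvalues) *
        star (hS.eigenvectorUnitary : Matrix (Fin n) (Fin n) ℝ))
      = ((hS.eigenvectorUnitary : Matrix (Fin n) (Fin n) ℝ) * diagonal (f ∘ hS.eigenvalues) *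
        star (hS.eigenvectorUnitary : Matrix (Fin n) (Fin n) ℝ)) * X := by
  set V := (hS.eigenvectorUnitary : Matrix (Fin n) (Fin n) ℝ) with hVdef
  have hV1 : V * star V = 1 := Matrix.mem_unitaryGroup_iff.mp hS.eigenvectorUnitary.2
  have hV2 : star V * V = 1 := Matrix.mem_unitaryGroup_iff'.mp hS.eigenvectorUnitary.2
  set Y := star V * X * V with hY
  set d : Fin n → ℝ := RCLike.ofReal ∘ hS.eigenvalues with hd
  have hD : star V * S * V = diagonal d := by
    conv_lhs => rw [hS.spectral_theorem]
    calc star V * (V * diagonal d * star V) * V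
        = (star V * V) * diagonal d * (star V * V) := by noncomm_ring
      _ = diagonal d := by rw [hV2, one_mul, mul_one]
  have hYD : Y * diagonal d = diagonal d * Y := by
    calc Y * diagonal d = (star V * X * V) * (star V * S * V) := by rw [hD]
      _ = star V * X * (V * star V) * S * V := by noncomm_ring
      _ = star V * (X * S) * V := by rw [hV1]; noncomm_ring
      _ = star V * (S * X) * V := by rw [h]
      _ = (star V * S * V) * (star V * X * V) := by
          rw [show star V * S * V * (star V * X * V)
              = star V * S * (V * star V) * X * V by noncomm_ring, hV1]
          noncomm_ring
      _ = diagonal d * Y := by rw [hD]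
  have hYD' : Y * diagonal (f ∘ hS.eigenvalues) = diagonal (f ∘ hS.eigenvalues) * Y := by
    refine commute_diagonal_map hYD fun i j hij => ?_
    have : hS.eigenvalues i = hS.eigenvalues j := by
      simpa [hd, ofReal_real] using hij
    simp [Function.comp, this]
  have hXV : X * V = V * Y := by
    rw [hY]
    calc X * V = (V * star V) * X * V := by rw [hV1, one_mul]
      _ = V * (star V * X * V) := by noncomm_ring
  have hVX : star V * X = Y * star V := by
    rw [hY]
    calc star V * X = star V * X * (V * star V) := by rw [hV1, mul_one]
      _ = star V * X * V * star V := by noncomm_ring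
  calc X * (V * diagonal (f ∘ hS.eigenvalues) * star V)
      = (X * V) * diagonal (f ∘ hS.eigenvalues) * star V := by noncomm_ring
    _ = V * (Y * diagonal (f ∘ hS.eigenvalues)) * star V := by rw [hXV]; noncomm_ring
    _ = V * diagonal (f ∘ hS.eigenvalues) * (Y * star V) := by rw [hYD']; noncomm_ring
    _ = V * diagonal (f ∘ hS.eigenvalues) * (star V * X) := by rw [hVX]
    _ = _ := by noncomm_ring

lemma sqrt_eq {S : Matrix (Fin n) (Fin n) ℝ} (hS : S.PosSemidef) :
    hS.sqrt = (hS.1.eigenvectorUnitary : Matrix (Fin n) (Fin n) ℝ) *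
      diagonal (Real.sqrt ∘ hS.1.eigenvalues) *
      star (hS.1.eigenvectorUnitary : Matrix (Fin n) (Fin n) ℝ) := rfl

lemma commute_sqrt {S X : Matrix (Fin n) (Fin n) ℝ} (hS : S.PosSemidef)
    (h : X * S = S * X) : X * hS.sqrt = hS.sqrt * X := by
  rw [sqrt_eq]
  exact commute_conj_diag hS.1 h Real.sqrt

lemma conjDiag_posSemidef {S : Matrix (Fin n) (Fin n) ℝ} (hS : S.IsHermitian)
    {g : Fin n → ℝ} (hg : 0 ≤ g) :
    ((hS.eigenvectorUnitary : Matrix (Fin n) (Fin n) ℝ) * diagonal g *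
      star (hS.eigenvectorUnitary : Matrix (Fin n) (Fin n) ℝ)).PosSemidef := by
  rw [Matrix.star_eq_conjTranspose]
  exact (Matrix.PosSemidef.diagonal hg).mul_mul_conjTranspose_same _

theorem _root_.Matrix.PosSemidef.posSemidef_sqrt {S : Matrix (Fin n) (Fin n) ℝ}
    (hS : S.PosSemidef) : hS.sqrt.PosSemidef := by
  rw [sqrt_eq]
  exact conjDiag_posSemidef _ (fun i => Real.sqrt_nonneg _)

theorem _root_.Matrix.PosSemidef.sqrt_mul_self {S : Matrix (Fin n) (Fin n) ℝ}
    (hS : S.PosSemidef) : hS.sqrt * hS.sqrt = S := by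
  rw [sqrt_eq]
  set V := (hS.1.eigenvectorUnitary : Matrix (Fin n) (Fin n) ℝ) with hVdef
  have hV2 : star V * V = 1 := Matrix.mem_unitaryGroup_iff'.mp hS.1.eigenvectorUnitary.2
  conv_rhs => rw [hS.1.spectral_theorem]
  calc V * diagonal (Real.sqrt ∘ hS.1.eigenvalues) * star V *
        (V * diagonal (Real.sqrt ∘ hS.1.eigenvalues) * star V)
      = V * (diagonal (Real.sqrt ∘ hS.1.eigenvalues) * (star V * V) *
        diagonal (Real.sqrt ∘ hS.1.eigenvalues)) * star V := by noncomm_ring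
    _ = _ := by
      rw [hV2, mul_one, diagonal_mul_diagonal]
      congr 3
      funext i
      simp [Real.mul_self_sqrt (hS.eigenvalues_nonneg i)]

lemma sqrt_sub_smul_eq {S : Matrix (Fin n) (Fin n) ℝ} (hS : S.PosSemidef) (c : ℝ) :
    hS.sqrt - c • 1 = (hS.1.eigenvectorUnitary : Matrix (Fin n) (Fin n) ℝ) *
      diagonal (fun i => Real.sqrt (hS.1.eigenvalues i) - c) *
      star (hS.1.eigenvectorUnitary : Matrix (Fin n) (Fin n) ℝ) := by
  set V := (hS.1.eigenvectorUnitary : Matrix (Fin n) (Fin n) ℝ) with hVdef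
  have hV1 : V * star V = 1 := Matrix.mem_unitaryGroup_iff.mp hS.1.eigenvectorUnitary.2
  have h1 : (c • 1 : Matrix (Fin n) (Fin n) ℝ) = V * diagonal (fun _ => c) * star V := by
    rw [← Matrix.smul_one_eq_diagonal, Matrix.mul_smul, mul_one, Matrix.smul_mul, hV1]
  rw [sqrt_eq, h1, ← Matrix.sub_mul, ← Matrix.mul_sub, Matrix.diagonal_sub]
  rfl

lemma smul_sub_sqrt_eq {S : Matrix (Fin n) (Fin n) ℝ} (hS : S.PosSemidef) (c : ℝ) :
    c • 1 - hS.sqrt = (hS.1.eigenvectorUnitary : Matrix (Fin n) (Fin n) ℝ) *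
      diagonal (fun i => c - Real.sqrt (hS.1.eigenvalues i)) *
      star (hS.1.eigenvectorUnitary : Matrix (Fin n) (Fin n) ℝ) := by
  have := sqrt_sub_smul_eq hS c
  have h2 : (fun i => c - Real.sqrt (hS.1.eigenvalues i)) =
      (fun i => -(Real.sqrt (hS.1.eigenvalues i) - c)) := by funext i; ring
  rw [h2]
  have h3 : diagonal (fun i => -(Real.sqrt (hS.1.eigenvalues i) - c)) =
      -diagonal (fun i => Real.sqrt (hS.1.eigenvalues i) - c) := (Matrix.diagonal_neg _).symm
  rw [h3, Matrix.mul_neg, Matrix.neg_mul, ← this, neg_sub]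

lemma posSemidef_mul_of_commute {P Q : Matrix (Fin n) (Fin n) ℝ} (hP : P.PosSemidef)
    (hQ : Q.PosSemidef) (h : P * Q = Q * P) : (P * Q).PosSemidef := by
  have hc : P * hQ.sqrt = hQ.sqrt * P := commute_sqrt hQ h
  have key : hQ.sqrt * P * hQ.sqrtᴴ = P * Q := by
    rw [hQ.posSemidef_sqrt.1]
    calc hQ.sqrt * P * hQ.sqrt = hQ.sqrt * (P * hQ.sqrt) := by rw [mul_assoc]
      _ = hQ.sqrt * (hQ.sqrt * P) := by rw [hc]
      _ = (hQ.sqrt * hQ.sqrt) * P := by rw [mul_assoc]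
      _ = Q * P := by rw [hQ.sqrt_mul_self]
      _ = P * Q := h.symm
  rw [← key]
  exact hP.mul_mul_conjTranspose_same _

lemma smul_one_posSemidef {c : ℝ} (hc : 0 ≤ c) :
    ((c • 1 : Matrix (Fin n) (Fin n) ℝ)).PosSemidef := by
  rw [Matrix.smul_one_eq_diagonal]
  exact Matrix.PosSemidef.diagonal fun _ => hc

lemma trace_conj_lower {A X : Matrix (Fin n) (Fin n) ℝ} {c : ℝ}
    (h : (X - c • 1).PosSemidef) : c * (Aᴴ * A).trace ≤ (Aᴴ * X * A).trace := by
  have h2 := trace_nonneg (h.conjTranspose_mul_mul_same A)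
  have h3 : Aᴴ * (X - c • 1) * A = Aᴴ * X * A - c • (Aᴴ * A) := by
    rw [Matrix.mul_sub, Matrix.sub_mul, Matrix.mul_smul, mul_one, Matrix.smul_mul]
  rw [h3, Matrix.trace_sub, Matrix.trace_smul] at h2
  simpa using h2
  
lemma trace_conj_upper {A X : Matrix (Fin n) (Fin n) ℝ} {c : ℝ}
    (h : (c • 1 - X).PosSemidef) : (Aᴴ * X * A).trace ≤ c * (Aᴴ * A).trace := by
  have h2 := trace_nonneg (h.conjTranspose_mul_mul_same A)
  have h3 : Aᴴ * (c • 1 - X) * A = c • (Aᴴ * A) - Aᴴ * X * A := by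
    rw [Matrix.mul_sub, Matrix.sub_mul, Matrix.mul_smul, mul_one, Matrix.smul_mul]
  rw [h3, Matrix.trace_sub, Matrix.trace_smul] at h2
  simpa using h2

end WassersteinAux

set_option maxHeartbeats 2000000 in
open WassersteinAux in
/-- Bi-Lipschitz equivalence of the profile distance `Δ` and the 2-Wasserstein
distance `W₂` between Gaussians with commuting covariances with spectra in
`[λ_min, λ_max]`. -/
theorem wasserstein_profile_biLipschitz {n : ℕ}
    (μ₁ μ₂ : EuclideanSpace ℝ (Fin n)) {S₁ S₂ : Matrix (Fin n) (Fin n) ℝ}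
    {lmin lmax : ℝ}
    (hS₁ : S₁.PosDef) (hS₂ : S₂.PosDef)
    (hcomm : S₁ * S₂ = S₂ * S₁)
    (h0 : 0 < lmin) (hle : lmin ≤ lmax)
    (hev₁ : ∀ i, hS₁.1.eigenvalues i ∈ Set.Icc lmin lmax)
    (hev₂ : ∀ i, hS₂.1.eigenvalues i ∈ Set.Icc lmin lmax) :
    (min 1 (2 * Real.sqrt lmax)⁻¹) ^ 2 * (‖μ₁ - μ₂‖ ^ 2 + frobSq (S₁ - S₂))
      ≤ ‖μ₁ - μ₂‖ ^ 2 + frobSq (hS₁.posSemidef.sqrt - hS₂.posSemidef.sqrt) ∧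
    ‖μ₁ - μ₂‖ ^ 2 + frobSq (hS₁.posSemidef.sqrt - hS₂.posSemidef.sqrt)
      ≤ (max 1 (2 * Real.sqrt lmin)⁻¹) ^ 2 * (‖μ₁ - μ₂‖ ^ 2 + frobSq (S₁ - S₂)) := by
  have h0' : 0 < lmax := lt_of_lt_of_le h0 hle
  set T₁ := hS₁.posSemidef.sqrt with hT₁def
  set T₂ := hS₂.posSemidef.sqrt with hT₂def
  have hH₁ : T₁ᴴ = T₁ := hS₁.posSemidef.posSemidef_sqrt.1
  have hH₂ : T₂ᴴ = T₂ := hS₂.posSemidef.posSemidef_sqrt.1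
  have hST : S₁ * T₂ = T₂ * S₁ := commute_sqrt hS₂.posSemidef hcomm
  have hTT : T₂ * T₁ = T₁ * T₂ := commute_sqrt hS₁.posSemidef hST.symm
  set A := T₁ - T₂ with hAdef
  set B := T₁ + T₂ with hBdef
  have hAherm : Aᴴ = A := by rw [hAdef, Matrix.conjTranspose_sub, hH₁, hH₂]
  have hBherm : Bᴴ = B := by rw [hBdef, Matrix.conjTranspose_add, hH₁, hH₂]
  have hm₁ : T₁ * T₁ = S₁ := hS₁.posSemidef.sqrt_mul_self
  have hm₂ : T₂ * T₂ = S₂ := hS₂.posSemidef.sqrt_mul_self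
  have hAB : A * B = S₁ - S₂ := by
    have h' : A * B = T₁ * T₁ + (T₁ * T₂ - T₂ * T₁) - T₂ * T₂ := by
      rw [hAdef, hBdef]; noncomm_ring
    rw [h', hTT, sub_self, add_zero, hm₁, hm₂]
  -- trace identities
  have htrA : frobSq A = (Aᴴ * A).trace := frobSq_eq_trace A
  have htrS : frobSq (S₁ - S₂) = (A * (B * B) * A).trace := by
    rw [frobSq_eq_trace, ← hAB, Matrix.conjTranspose_mul, hAherm, hBherm]
    calc ((B * A) * (A * B)).trace = ((A * B) * (B * A)).trace := Matrix.trace_mul_comm _ _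
      _ = (A * (B * B) * A).trace := by
          rw [show (A * B) * (B * A) = A * (B * B) * A from by noncomm_ring]
  -- eigenvalue shifted PSD facts
  have hT₁low : (T₁ - Real.sqrt lmin • 1).PosSemidef := by
    rw [hT₁def, sqrt_sub_smul_eq]
    exact conjDiag_posSemidef _ (fun i => sub_nonneg.mpr (Real.sqrt_le_sqrt (hev₁ i).1))
  have hT₂low : (T₂ - Real.sqrt lmin • 1).PosSemidef := by
    rw [hT₂def, sqrt_sub_smul_eq]
    exact conjDiag_posSemidef _ (fun i => sub_nonneg.mpr (Real.sqrt_le_sqrt (hev₂ i).1))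
  have hT₁up : (Real.sqrt lmax • 1 - T₁).PosSemidef := by
    rw [hT₁def, smul_sub_sqrt_eq]
    exact conjDiag_posSemidef _ (fun i => sub_nonneg.mpr (Real.sqrt_le_sqrt (hev₁ i).2))
  have hT₂up : (Real.sqrt lmax • 1 - T₂).PosSemidef := by
    rw [hT₂def, smul_sub_sqrt_eq]
    exact conjDiag_posSemidef _ (fun i => sub_nonneg.mpr (Real.sqrt_le_sqrt (hev₂ i).2))
  have hBpsd : B.PosSemidef :=
    (hS₁.posSemidef.posSemidef_sqrt).add (hS₂.posSemidef.posSemidef_sqrt)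
  have hBlow : (B - (2 * Real.sqrt lmin) • 1).PosSemidef := by
    have he : B - (2 * Real.sqrt lmin) • 1
        = (T₁ - Real.sqrt lmin • 1) + (T₂ - Real.sqrt lmin • 1) := by
      rw [hBdef, two_mul, add_smul]; abel
    rw [he]; exact hT₁low.add hT₂low
  have hBup : ((2 * Real.sqrt lmax) • 1 - B).PosSemidef := by
    have he : (2 * Real.sqrt lmax) • 1 - B
        = (Real.sqrt lmax • 1 - T₁) + (Real.sqrt lmax • 1 - T₂) := by
      rw [hBdef, two_mul, add_smul]; abel
    rw [he]; exact hT₁up.add hT₂up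
  have hQlow : (B + (2 * Real.sqrt lmin) • 1).PosSemidef :=
    hBpsd.add (smul_one_posSemidef (by positivity))
  have hQup : ((2 * Real.sqrt lmax) • 1 + B).PosSemidef :=
    (smul_one_posSemidef (by positivity)).add hBpsd
  have hCB : ∀ c : ℝ, (c • (1 : Matrix (Fin n) (Fin n) ℝ)) * B = B * (c • 1) := by
    intro c
    rw [Matrix.smul_mul, Matrix.mul_smul, one_mul, mul_one]
  have hCC : ∀ c : ℝ, 0 ≤ c → ((2 * Real.sqrt c) • (1 : Matrix (Fin n) (Fin n) ℝ)) *
      ((2 * Real.sqrt c) • 1) = (4 * c) • 1 := by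
    intro c hc
    rw [Matrix.smul_mul, Matrix.mul_smul, one_mul, smul_smul]
    congr 1
    have := Real.mul_self_sqrt hc
    nlinarith [this]
  have hBBlow : (B * B - (4 * lmin) • 1).PosSemidef := by
    set C : Matrix (Fin n) (Fin n) ℝ := (2 * Real.sqrt lmin) • 1 with hCdef
    have heq : (B - C) * (B + C) = B * B - (4 * lmin) • 1 := by
      calc (B - C) * (B + C) = B * B + (B * C - C * B) - C * C := by noncomm_ring
        _ = B * B - (4 * lmin) • 1 := by rw [← hCB, sub_self, add_zero, hCdef, hCC lmin h0.le]
    have hcm : (B - C) * (B + C) = (B + C) * (B - C) := by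
      have heq2 : (B + C) * (B - C) = B * B + (C * B - B * C) - C * C := by noncomm_ring
      rw [heq2, hCB, sub_self, add_zero, heq, hCdef, hCC lmin h0.le]
    exact heq ▸ posSemidef_mul_of_commute hBlow hQlow hcm
  have hBBup : ((4 * lmax) • 1 - B * B).PosSemidef := by
    set C : Matrix (Fin n) (Fin n) ℝ := (2 * Real.sqrt lmax) • 1 with hCdef
    have heq : (C - B) * (C + B) = (4 * lmax) • 1 - B * B := by
      calc (C - B) * (C + B) = C * C + (C * B - B * C) - B * B := by noncomm_ring
        _ = (4 * lmax) • 1 - B * B := by rw [hCB, sub_self, add_zero, hCdef, hCC lmax h0'.le]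
    have hcm : (C - B) * (C + B) = (C + B) * (C - B) := by
      have heq2 : (C + B) * (C - B) = C * C + (B * C - C * B) - B * B := by noncomm_ring
      rw [heq2, ← hCB, sub_self, add_zero, heq, hCdef, hCC lmax h0'.le]
    exact heq ▸ posSemidef_mul_of_commute hBup hQup hcm
  -- trace bounds
  have hlow : 4 * lmin * (Aᴴ * A).trace ≤ (Aᴴ * (B * B) * A).trace := by
    simpa using trace_conj_lower (A := A) (c := 4 * lmin) hBBlow
  have hup : (Aᴴ * (B * B) * A).trace ≤ 4 * lmax * (Aᴴ * A).trace := by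
    simpa using trace_conj_upper (A := A) (c := 4 * lmax) hBBup
  rw [hAherm] at hlow hup
  rw [hAherm] at htrA
  have ha0 : 0 ≤ frobSq A := by
    refine Finset.sum_nonneg fun i _ => Finset.sum_nonneg fun j _ => sq_nonneg _
  have hm0 : (0:ℝ) ≤ ‖μ₁ - μ₂‖ ^ 2 := by positivity
  have hd_low : 4 * lmin * frobSq A ≤ frobSq (S₁ - S₂) := by rw [htrS, htrA]; exact hlow
  have hd_up : frobSq (S₁ - S₂) ≤ 4 * lmax * frobSq A := by rw [htrS, htrA]; exact hup
  have hd0 : 0 ≤ frobSq (S₁ - S₂) := le_trans (by nlinarith) hd_low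
  -- numeric conclusion
  have hsL : 0 < Real.sqrt lmax := Real.sqrt_pos.mpr h0'
  have hsl : 0 < Real.sqrt lmin := Real.sqrt_pos.mpr h0
  set x : ℝ := (2 * Real.sqrt lmax)⁻¹ with hx
  set y : ℝ := (2 * Real.sqrt lmin)⁻¹ with hy
  have hx0 : 0 < x := by rw [hx]; positivity
  have hy0 : 0 < y := by rw [hy]; positivity
  have h4x : (2 * Real.sqrt lmax) ^ 2 = 4 * lmax := by
    rw [mul_pow, Real.sq_sqrt h0'.le]; ring
  have h4y : (2 * Real.sqrt lmin) ^ 2 = 4 * lmin := by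
    rw [mul_pow, Real.sq_sqrt h0.le]; ring
  have hx2 : x ^ 2 * (4 * lmax) = 1 := by
    rw [hx, inv_pow, h4x]; exact inv_mul_cancel₀ (by positivity)
  have hy2 : y ^ 2 * (4 * lmin) = 1 := by
    rw [hy, inv_pow, h4y]; exact inv_mul_cancel₀ (by positivity)
  constructor
  · have k1 : (min 1 x) ^ 2 ≤ 1 := by
      have h1 := min_le_left 1 x
      nlinarith [le_min zero_le_one hx0.le]
    have k2 : (min 1 x) ^ 2 ≤ x ^ 2 := by
      have h1 := min_le_right 1 x
      nlinarith [le_min zero_le_one hx0.le]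
    have k3 : x ^ 2 * frobSq (S₁ - S₂) ≤ frobSq A := by
      have F : x ^ 2 * frobSq (S₁ - S₂) ≤ x ^ 2 * (4 * lmax * frobSq A) :=
        mul_le_mul_of_nonneg_left hd_up (sq_nonneg x)
      have E : x ^ 2 * (4 * lmax * frobSq A) = frobSq A := by
        rw [show x ^ 2 * (4 * lmax * frobSq A) = (x ^ 2 * (4 * lmax)) * frobSq A by ring,
          hx2, one_mul]
      linarith
    nlinarith [mul_le_mul_of_nonneg_right k1 hm0, mul_le_mul_of_nonneg_right k2 hd0]
  · have k1 : 1 ≤ (max 1 y) ^ 2 := by nlinarith [le_max_left 1 y]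
    have k2 : y ^ 2 ≤ (max 1 y) ^ 2 := by nlinarith [le_max_right 1 y, hy0.le]
    have k3 : frobSq A ≤ y ^ 2 * frobSq (S₁ - S₂) := by
      have F : y ^ 2 * (4 * lmin * frobSq A) ≤ y ^ 2 * frobSq (S₁ - S₂) :=
        mul_le_mul_of_nonneg_left hd_low (sq_nonneg y)
      have E : y ^ 2 * (4 * lmin * frobSq A) = frobSq A := by
        rw [show y ^ 2 * (4 * lmin * frobSq A) = (y ^ 2 * (4 * lmin)) * frobSq A by ring,
          hy2, one_mul]
      linarith
    nlinarith [mul_le_mul_of_nonneg_right k1 hm0, mul_le_mul_of_nonneg_right k2 hd0]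
end

section
/- The one-dimensional Laplace mechanism is ε-differentially private: for a function f with |f(D) − f(D')| ≤ Δ for neighbouring inputs, releasing f(D) + η with η ∼ Laplace(0, Δ/ε) satisfies, for every measurable S ⊆ ℝ, Pr[f(D) + η ∈ S] ≤ e^ε · Pr[f(D') + η ∈ S]. -/
open MeasureTheory Set Real

lemma laplace_half (b a : ℝ) (hb : 0 < b) :
    IntegrableOn (fun x : ℝ => Real.exp (-|x - a| / b)) (Ioi a) := by
  have := (exp_neg_integrableOn_Ioi a (b := 1/b) (by positivity)).const_mul (Real.exp (a / b))
  refine IntegrableOn.congr_fun this (fun x hx => ?_) measurableSet_Ioi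
  rw [mem_Ioi] at hx
  rw [← Real.exp_add, abs_of_pos (by linarith)]
  ring_nf

lemma laplace_integrable (b a : ℝ) (hb : 0 < b) :
    Integrable (fun x : ℝ => Real.exp (-|x - a| / b)) := by
  have h1 : IntegrableOn (fun x : ℝ => Real.exp (-|x - a| / b)) (Ioi a) :=
    laplace_half b a hb
  have h2 : IntegrableOn (fun x : ℝ => Real.exp (-|x - a| / b)) (Iic a) := by
    have hneg : MeasurePreserving (Neg.neg : ℝ → ℝ)
        (volume.restrict (Neg.neg ⁻¹' (Ioi (-a)))) (volume.restrict (Ioi (-a))) :=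
      (Measure.measurePreserving_neg volume).restrict_preimage measurableSet_Ioi
    have hemb : MeasurableEmbedding (Neg.neg : ℝ → ℝ) :=
      (MeasurableEquiv.neg ℝ).measurableEmbedding
    have h3 := (hneg.integrable_comp_emb hemb).mpr (laplace_half b (-a) hb)
    have hpre : (Neg.neg ⁻¹' (Ioi (-a)) : Set ℝ) = Iio a := by
      ext x; simp
    rw [hpre] at h3
    have h4 : IntegrableOn (fun x : ℝ => Real.exp (-|x - a| / b)) (Iio a) := by
      refine IntegrableOn.congr_fun h3 (fun x _ => ?_) measurableSet_Iio
      simp only [Function.comp]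
      rw [show -x - -a = -(x - a) by ring, abs_neg]
    exact h4.congr_set_ae Iio_ae_eq_Iic.symm
  have : Iic a ∪ Ioi a = univ := Iic_union_Ioi
  rw [← integrableOn_univ, ← this]
  exact h2.union h1

/-- One-dimensional Laplace mechanism is `ε`-differentially private: if the
outputs on neighbouring datasets differ by at most `Δ` and the noise scale is
`b = Δ/ε`, then for every measurable set `S`, the probability (computed from
the shifted Laplace density) satisfies the `e^ε` ratio bound. -/
theorem laplace_mechanism_dp (ε Δ : ℝ) (hε : 0 < ε) (hΔ : 0 < Δ)
    (a a' : ℝ) (hsens : |a - a'| ≤ Δ) :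
    ∀ S : Set ℝ, MeasurableSet S →
      (∫ x in S, (1 / (2 * (Δ / ε))) * Real.exp (-|x - a| / (Δ / ε))) ≤
        Real.exp ε * ∫ x in S, (1 / (2 * (Δ / ε))) * Real.exp (-|x - a'| / (Δ / ε)) := by
  intro S hS
  set b := Δ / ε with hbdef
  have hb : 0 < b := div_pos hΔ hε
  have key : ∀ x : ℝ, (1 / (2 * b)) * Real.exp (-|x - a| / b) ≤
      Real.exp ε * ((1 / (2 * b)) * Real.exp (-|x - a'| / b)) := by
    intro x
    rw [mul_left_comm]
    apply mul_le_mul_of_nonneg_left _ (by positivity)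
    rw [← Real.exp_add, Real.exp_le_exp]
    have h1 : |x - a| ≥ |x - a'| - |a - a'| := by
      have := abs_sub_abs_le_abs_sub (x - a') (x - a)
      have : |x - a' - (x - a)| = |a - a'| := by rw [show x - a' - (x - a) = a - a' by ring]
      linarith [abs_sub_abs_le_abs_sub (x - a') (x - a), this]
    have hεb : ε = Δ / b := by rw [hbdef]; field_simp
    have hεb2 : ε * b = Δ := by rw [hbdef]; field_simp
    have h2 : -|x - a| ≤ ε * b + -|x - a'| := by linarith
    calc -|x - a| / b ≤ (ε * b + -|x - a'|) / b := by gcongr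
      _ = ε + -|x - a'| / b := by field_simp
  have hint : ∀ c : ℝ, IntegrableOn (fun x => (1 / (2 * b)) * Real.exp (-|x - c| / b)) S := by
    intro c
    exact ((laplace_integrable b c hb).const_mul _).integrableOn
  calc (∫ x in S, (1 / (2 * b)) * Real.exp (-|x - a| / b))
      ≤ ∫ x in S, Real.exp ε * ((1 / (2 * b)) * Real.exp (-|x - a'| / b)) := by
        apply setIntegral_mono_on (hint a) ((hint a').const_mul _) hS (fun x _ => key x)
    _ = Real.exp ε * ∫ x in S, (1 / (2 * b)) * Real.exp (-|x - a'| / b) := by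
        rw [integral_const_mul]
end
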